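/- arXiv:0905.2681 — 4 statements merged into one kernel-verified Lean document; each statement's English description precedes it below -/
import Mathlib

section
/- Let p be an odd prime with p ≡ 1 (mod 4) and let a be a quadratic non-residue mod p. Then there are no integers x₁, x₂, x₃ with 1 + a·x₁² + p·x₂² = a·p·x₃². -/
/-- Let `p` be an odd prime with `p ≡ 1 (mod 4)` and let `a` be a quadratic
non-residue mod `p`. Then there are no integers `x₁, x₂, x₃` with
`1 + a·x₁² + p·x₂² = a·p·x₃²`. -/
theorem no_solution_of_nonresidue (p : ℕ) (a : ℤ) (hp : p.Prime) (hodd : p ≠ 2)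
    (hp1 : p % 4 = 1) (ha : ¬ ∃ y : ℤ, (y : ZMod p) ^ 2 = (a : ZMod p)) :
    ¬ ∃ x₁ x₂ x₃ : ℤ, 1 + a * x₁ ^ 2 + (p : ℤ) * x₂ ^ 2 = a * (p : ℤ) * x₃ ^ 2 := by
  haveI : Fact p.Prime := ⟨hp⟩
  rintro ⟨x₁, x₂, x₃, h⟩
  have h' : (1 : ZMod p) + (a : ZMod p) * (x₁ : ZMod p) ^ 2 = 0 := by
    have := congrArg (fun z : ℤ => (z : ZMod p)) h
    push_cast at this
    simpa using this
  have hx : (x₁ : ZMod p) ≠ 0 := by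
    intro hx0
    rw [hx0] at h'
    simp at h'
  have hax : (a : ZMod p) * (x₁ : ZMod p) ^ 2 = -1 := by linear_combination h'
  have hneg : IsSquare (-1 : ZMod p) := by
    rw [ZMod.exists_sq_eq_neg_one_iff]
    omega
  obtain ⟨c, hc⟩ := hneg
  apply ha
  set z : ZMod p := c * (x₁ : ZMod p)⁻¹ with hz
  refine ⟨(z.val : ℤ), ?_⟩
  have hzz : ((z.val : ℤ) : ZMod p) = z := by
    push_cast
    simp [ZMod.natCast_val, ZMod.cast_id]
  rw [hzz, hz]
  have hinv : (x₁ : ZMod p) * (x₁ : ZMod p)⁻¹ = 1 := ZMod.mul_inv_of_unit _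
    (isUnit_iff_ne_zero.mpr hx)
  have ha' : (a : ZMod p) = -((x₁ : ZMod p)⁻¹) ^ 2 := by
    have : (a : ZMod p) * ((x₁ : ZMod p) * (x₁ : ZMod p)⁻¹) ^ 2 =
        -((x₁ : ZMod p)⁻¹) ^ 2 := by ring_nf; linear_combination ((x₁ : ZMod p)⁻¹)^2 * hax
    simpa [hinv] using this
  rw [ha']
  linear_combination ((x₁ : ZMod p)⁻¹)^2 * hc.symm
end

section
/- Let p be an odd prime with p ≡ 1 (mod 4) and a a quadratic non-residue mod p. If integers x₀, x₁, x₂, x₃ satisfy x₀² - a·x₁² - p·x₂² + a·p·x₃² = 1 and x₀ = 0, then a contradiction follows; i.e., any integral solution has x₀ ≠ 0. -/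
/-- Let `p` be an odd prime with `p ≡ 1 (mod 4)` and `a` a quadratic non-residue
mod `p`. If integers `x₀, x₁, x₂, x₃` satisfy `x₀² - a x₁² - p x₂² + a p x₃² = 1`
and `x₀ = 0`, a contradiction follows: any integral solution has `x₀ ≠ 0`. -/
theorem x0_ne_zero_of_solution (p : ℕ) (a : ℤ) (hp : p.Prime) (hodd : p ≠ 2)
    (hp1 : p % 4 = 1) (ha : ¬ ∃ y : ℤ, (y : ZMod p) ^ 2 = (a : ZMod p))
    (x₀ x₁ x₂ x₃ : ℤ)
    (hsol : x₀ ^ 2 - a * x₁ ^ 2 - (p : ℤ) * x₂ ^ 2 + a * (p : ℤ) * x₃ ^ 2 = 1)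
    (h0 : x₀ = 0) : False := by
  haveI : Fact p.Prime := ⟨hp⟩
  subst h0
  -- reduce mod p
  have hmod : (-(a : ZMod p)) * (x₁ : ZMod p) ^ 2 = 1 := by
    have := congrArg (fun z : ℤ => (z : ZMod p)) hsol
    push_cast at this
    simp [ZMod.natCast_self] at this
    linear_combination this
  -- -1 is a square
  have hsq : IsSquare (-1 : ZMod p) := by
    rw [ZMod.exists_sq_eq_neg_one_iff]
    omega
  obtain ⟨c, hc⟩ := hsq
  have hx1 : (x₁ : ZMod p) ≠ 0 := by
    intro h
    rw [h] at hmod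
    simp at hmod
  have ha' : (a : ZMod p) = (c * (x₁ : ZMod p)⁻¹) ^ 2 := by
    field_simp
    have : (a : ZMod p) * (x₁ : ZMod p) ^ 2 = -1 := by linear_combination -hmod
    rw [this, hc]
    ring
  apply ha
  refine ⟨((c * (x₁ : ZMod p)⁻¹) : ZMod p).val, ?_⟩
  rw [ZMod.natCast_val, ZMod.intCast_cast, ZMod.cast_id, ha']
end

section
/- Let p ≡ 1 (mod 4) be prime and a a quadratic non-residue mod p. The set Γ of matrices ((x₀ + x₁√a, √p(x₂ + x₃√a)), (√p(x₂ - x₃√a), x₀ - x₁√a)) with integers xᵢ satisfying x₀² - a·x₁² - p·x₂² + a·p·x₃² = 1 is torsion-free as a subgroup of SL(2,ℝ) modulo ±Id: any element of finite order equals ±Id. -/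
open Matrix

/-- The matrix `((x₀ + x₁√a, √p(x₂ + x₃√a)), (√p(x₂ - x₃√a), x₀ - x₁√a))`. -/
noncomputable def gammaMat (p : ℕ) (a : ℤ) (x₀ x₁ x₂ x₃ : ℤ) : Matrix (Fin 2) (Fin 2) ℝ :=
  !![(x₀ : ℝ) + x₁ * Real.sqrt a, Real.sqrt p * ((x₂ : ℝ) + x₃ * Real.sqrt a);
     Real.sqrt p * ((x₂ : ℝ) - x₃ * Real.sqrt a), (x₀ : ℝ) - x₁ * Real.sqrt a]

/-- Cayley–Hamilton for `gammaMat`: `M² = (2x₀)M − 1`. -/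
lemma gammaMat_sq (p : ℕ) (a : ℤ) (ha0 : 0 < a) (x₀ x₁ x₂ x₃ : ℤ)
    (hsol : x₀ ^ 2 - a * x₁ ^ 2 - (p : ℤ) * x₂ ^ 2 + a * (p : ℤ) * x₃ ^ 2 = 1) :
    gammaMat p a x₀ x₁ x₂ x₃ * gammaMat p a x₀ x₁ x₂ x₃
      = ((2 * x₀ : ℤ) : ℝ) • gammaMat p a x₀ x₁ x₂ x₃ - 1 := by
  have hsa : Real.sqrt (a:ℝ) * Real.sqrt (a:ℝ) = (a : ℝ) := Real.mul_self_sqrt (by positivity)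
  have hsp : Real.sqrt (p:ℝ) * Real.sqrt (p:ℝ) = (p : ℝ) := Real.mul_self_sqrt (by positivity)
  have hsolR : (x₀:ℝ) ^ 2 - a * x₁ ^ 2 - (p : ℝ) * x₂ ^ 2 + a * (p : ℝ) * x₃ ^ 2 = 1 := by
    exact_mod_cast congrArg (Int.cast : ℤ → ℝ) hsol
  ext i j
  fin_cases i <;> fin_cases j
  · simp [gammaMat, Matrix.mul_apply, Fin.sum_univ_two, Matrix.one_apply]
    linear_combination ((x₁:ℝ)^2) * hsa
      + ((x₂:ℝ)^2 - Real.sqrt (a:ℝ) * Real.sqrt (a:ℝ) * (x₃:ℝ)^2) * hsp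
      - ((p:ℝ) * (x₃:ℝ)^2) * hsa - hsolR
  · simp [gammaMat, Matrix.mul_apply, Fin.sum_univ_two, Matrix.one_apply]
    ring
  · simp [gammaMat, Matrix.mul_apply, Fin.sum_univ_two, Matrix.one_apply]
    ring
  · simp [gammaMat, Matrix.mul_apply, Fin.sum_univ_two, Matrix.one_apply]
    linear_combination ((x₁:ℝ)^2) * hsa
      + ((x₂:ℝ)^2 - Real.sqrt (a:ℝ) * Real.sqrt (a:ℝ) * (x₃:ℝ)^2) * hsp
      - ((p:ℝ) * (x₃:ℝ)^2) * hsa - hsolR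

/-- The Chebyshev-like sequence `c₀ = 0, c₁ = 1, c_{n+2} = t·c_{n+1} − c_n`. -/
def cseq (t : ℤ) : ℕ → ℤ
  | 0 => 0
  | 1 => 1
  | (n + 2) => t * cseq t (n + 1) - cseq t n

lemma cseq_growth (t : ℤ) (ht : 2 ≤ |t|) : ∀ n, |cseq t n| + 1 ≤ |cseq t (n + 1)| := by
  intro n
  induction n using Nat.twoStepInduction with
  | zero => simp [cseq]
  | one => simpa [cseq] using ht
  | more n ih ih2 =>
    have h3 : cseq t (n + 3) = t * cseq t (n + 2) - cseq t (n + 1) := rfl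
    have habs : |t * cseq t (n + 2)| - |cseq t (n + 1)| ≤ |cseq t (n + 3)| := by
      rw [h3]; exact abs_sub_abs_le_abs_sub _ _
    have hm : |t * cseq t (n + 2)| = |t| * |cseq t (n + 2)| := abs_mul _ _
    nlinarith [ih2, abs_nonneg (cseq t (n + 2)), abs_nonneg (cseq t (n + 1))]

lemma cseq_growth' (t : ℤ) (ht : 2 ≤ |t|) (n : ℕ) : cseq t (n + 1) ≠ 0 := by
  have h := cseq_growth t ht n
  have := abs_nonneg (cseq t n)
  intro h0
  rw [h0] at h
  simp at h
  omega

lemma gammaMat_pow (p : ℕ) (a : ℤ) (ha0 : 0 < a) (x₀ x₁ x₂ x₃ : ℤ)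
    (hsol : x₀ ^ 2 - a * x₁ ^ 2 - (p : ℤ) * x₂ ^ 2 + a * (p : ℤ) * x₃ ^ 2 = 1) (n : ℕ) :
    gammaMat p a x₀ x₁ x₂ x₃ ^ (n + 1)
      = ((cseq (2 * x₀) (n + 1) : ℤ) : ℝ) • gammaMat p a x₀ x₁ x₂ x₃
        - ((cseq (2 * x₀) n : ℤ) : ℝ) • 1 := by
  induction n with
  | zero => simp [cseq]
  | succ n ih =>
    rw [pow_succ, ih, sub_mul, smul_mul_assoc, smul_mul_assoc, one_mul,
      gammaMat_sq p a ha0 x₀ x₁ x₂ x₃ hsol]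
    show _ = ((cseq (2*x₀) (n+2) : ℤ) : ℝ) • _ - _
    rw [show cseq (2*x₀) (n+2) = 2*x₀ * cseq (2*x₀) (n+1) - cseq (2*x₀) n from rfl]
    push_cast
    module

lemma no_x0_zero (p : ℕ) (a : ℤ) (hp : p.Prime) (hp1 : p % 4 = 1)
    (ha : ¬ ∃ y : ℤ, (y : ZMod p) ^ 2 = (a : ZMod p))
    (x₁ x₂ x₃ : ℤ)
    (hsol : 0 - a * x₁ ^ 2 - (p : ℤ) * x₂ ^ 2 + a * (p : ℤ) * x₃ ^ 2 = 1) : False := by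
  haveI : Fact p.Prime := ⟨hp⟩
  have hcast : ((0 - a * x₁ ^ 2 - (p : ℤ) * x₂ ^ 2 + a * (p : ℤ) * x₃ ^ 2 : ℤ) : ZMod p)
      = ((1 : ℤ) : ZMod p) := congrArg _ hsol
  push_cast at hcast
  rw [ZMod.natCast_self] at hcast
  ring_nf at hcast
  have key : (a : ZMod p) * (x₁ : ZMod p) ^ 2 = -1 := by linear_combination -hcast
  have hx1 : (x₁ : ZMod p) ≠ 0 := by
    intro h
    rw [h] at key
    simp at key
  have h43 : p % 4 ≠ 3 := by omega
  obtain ⟨i, hi⟩ := (ZMod.exists_sq_eq_neg_one_iff (p := p)).mpr h43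
  apply ha
  obtain ⟨y, hy⟩ := ZMod.intCast_surjective (n := p) (i * (x₁ : ZMod p)⁻¹)
  refine ⟨y, ?_⟩
  rw [hy]
  have : (i * (x₁ : ZMod p)⁻¹) ^ 2 = -1 * ((x₁ : ZMod p) ^ 2)⁻¹ := by
    rw [mul_pow, sq i, ← hi, ← inv_pow]
  rw [this]
  field_simp
  linear_combination -key

/-- For `p ≡ 1 (mod 4)` prime and `a > 0` a quadratic non-residue mod `p`, the group
`Γ_{p,a}` of such matrices with `x₀² - a x₁² - p x₂² + a p x₃² = 1` is torsion free
modulo `±Id`: any element of finite order equals `±Id`. -/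
theorem gamma_torsionFree (p : ℕ) (a : ℤ) (hp : p.Prime) (hp1 : p % 4 = 1)
    (ha0 : 0 < a) (ha : ¬ ∃ y : ℤ, (y : ZMod p) ^ 2 = (a : ZMod p))
    (x₀ x₁ x₂ x₃ : ℤ)
    (hsol : x₀ ^ 2 - a * x₁ ^ 2 - (p : ℤ) * x₂ ^ 2 + a * (p : ℤ) * x₃ ^ 2 = 1)
    (n : ℕ) (hn : 0 < n)
    (hfin : (gammaMat p a x₀ x₁ x₂ x₃) ^ n = 1 ∨ (gammaMat p a x₀ x₁ x₂ x₃) ^ n = -1) :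
    gammaMat p a x₀ x₁ x₂ x₃ = 1 ∨ gammaMat p a x₀ x₁ x₂ x₃ = -1 := by
  by_cases hx0 : x₀ = 0
  · exfalso
    apply no_x0_zero p a hp hp1 ha x₁ x₂ x₃
    rw [hx0] at hsol
    linear_combination hsol
  · have ht : 2 ≤ |2 * x₀| := by
      rcases lt_or_gt_of_ne hx0 with h | h
      · rw [abs_of_neg (by omega : 2 * x₀ < 0)]; omega
      · rw [abs_of_pos (by omega : 0 < 2 * x₀)]; omega
    obtain ⟨m, rfl⟩ : ∃ m, n = m + 1 := ⟨n - 1, by omega⟩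
    have hpow := gammaMat_pow p a ha0 x₀ x₁ x₂ x₃ hsol m
    obtain ⟨ε, hε1, hMn⟩ : ∃ ε : ℝ, (ε = 1 ∨ ε = -1) ∧
        gammaMat p a x₀ x₁ x₂ x₃ ^ (m + 1) = ε • 1 := by
      rcases hfin with h | h
      · exact ⟨1, Or.inl rfl, by simpa using h⟩
      · exact ⟨-1, Or.inr rfl, by simpa using h⟩
    rw [hpow] at hMn
    have hcne : ((cseq (2 * x₀) (m + 1) : ℤ) : ℝ) ≠ 0 :=
      Int.cast_ne_zero.mpr (cseq_growth' _ ht m)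
    set c : ℝ := ((cseq (2 * x₀) (m + 1) : ℤ) : ℝ) with hc
    set d : ℝ := ((cseq (2 * x₀) m : ℤ) : ℝ) with hd
    have h01 := congrFun (congrFun hMn 0) 1
    have h10 := congrFun (congrFun hMn 1) 0
    have h00 := congrFun (congrFun hMn 0) 0
    have h11 := congrFun (congrFun hMn 1) 1
    simp [gammaMat, Matrix.smul_apply, Matrix.sub_apply, Matrix.one_apply] at h01 h10 h00 h11
    have hsqp : (0:ℝ) < Real.sqrt p := Real.sqrt_pos.mpr (by exact_mod_cast hp.pos)
    have hsqa : (0:ℝ) < Real.sqrt a := Real.sqrt_pos.mpr (by exact_mod_cast ha0)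
    -- off-diagonal entries vanish
    have e01 : (x₂ : ℝ) + x₃ * Real.sqrt a = 0 := by
      rcases h01 with h | h | h
      · exact absurd h hcne
      · exact absurd h hp.ne_zero
      · exact h
    have e10 : (x₂ : ℝ) - x₃ * Real.sqrt a = 0 := by
      rcases h10 with h | h | h
      · exact absurd h hcne
      · exact absurd h hp.ne_zero
      · exact h
    have hx2 : x₂ = 0 := by
      have : (x₂ : ℝ) = 0 := by linarith
      exact_mod_cast this
    have hx3 : x₃ = 0 := by
      have h3 : (x₃ : ℝ) * Real.sqrt a = 0 := by linarith
      rcases mul_eq_zero.mp h3 with h | h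
      · exact_mod_cast h
      · exact absurd h hsqa.ne'
    -- diagonal entries equal, so x₁ = 0
    have hx1 : x₁ = 0 := by
      have hdiff : c * ((x₁ : ℝ) * Real.sqrt a) * 2 = 0 := by linarith [h00, h11]
      rcases mul_eq_zero.mp hdiff with h | h
      · rcases mul_eq_zero.mp h with h | h
        · exact absurd h hcne
        · rcases mul_eq_zero.mp h with h | h
          · exact_mod_cast h
          · exact absurd h hsqa.ne'
      · norm_num at h
    -- then x₀² = 1
    rw [hx1, hx2, hx3] at hsol
    have hx : x₀ = 1 ∨ x₀ = -1 := by
      have h1 : (x₀ - 1) * (x₀ + 1) = 0 := by linear_combination hsol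
      rcases mul_eq_zero.mp h1 with h | h
      · left; omega
      · right; omega
    rcases hx with h | h
    · left
      ext i j
      fin_cases i <;> fin_cases j <;>
        simp [gammaMat, hx1, hx2, hx3, h, Matrix.one_apply]
    · right
      ext i j
      fin_cases i <;> fin_cases j <;>
        simp [gammaMat, hx1, hx2, hx3, h, Matrix.one_apply]
end

section
/- Let γ = ((a,c̄),(c,ā)) ∈ SU(1,1) with |a|² - |c|² = 1 and c ≠ 0, and let F(z) = 1 - z·z̄. Then the maximum of F over the isometric circle {z : |cz + ā| = 1} equals 2/(|a| + 1). -/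
/-- Let `γ = ((a, c̄),(c, ā)) ∈ SU(1,1)` with `|a|² - |c|² = 1` and `c ≠ 0`, and let
`F(z) = 1 - |z|²`. The maximum of `F` over the isometric circle `{z : |cz + ā| = 1}`
equals `2/(|a| + 1)`. -/
theorem max_F_on_isometric_circle (a c : ℂ)
    (h : ‖a‖ ^ 2 - ‖c‖ ^ 2 = 1) (hc : c ≠ 0) :
    IsGreatest ((fun z : ℂ => 1 - ‖z‖ ^ 2) ''
        {z : ℂ | ‖c * z + (starRingEnd ℂ) a‖ = 1})
      (2 / (‖a‖ + 1)) := by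
  have hCpos : 0 < ‖c‖ := norm_pos_iff.mpr hc
  have hA1 : 1 < ‖a‖ := by nlinarith [norm_nonneg a]
  have hApos : (0 : ℝ) < ‖a‖ := by linarith
  have hAne : (‖a‖ : ℂ) ≠ 0 := by
    exact_mod_cast Complex.ofReal_ne_zero.mpr (ne_of_gt hApos)
  set A := ‖a‖ with hAdef
  set C := ‖c‖ with hCdef
  constructor
  · -- membership: exhibit the maximizing point
    refine ⟨(starRingEnd ℂ) a * (((1 - A : ℝ) : ℂ) / (A : ℂ)) / c, ?_, ?_⟩
    · show ‖_‖ = 1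
      have heq : c * ((starRingEnd ℂ) a * (((1 - A : ℝ) : ℂ) / (A : ℂ)) / c)
          + (starRingEnd ℂ) a = (starRingEnd ℂ) a / (A : ℂ) := by
        field_simp
        push_cast
        ring
      rw [heq, norm_div, Complex.norm_conj, Complex.norm_real, Real.norm_eq_abs,
        abs_of_pos hApos, ← hAdef, div_self (ne_of_gt hApos)]
    · show 1 - ‖_‖ ^ 2 = 2 / (A + 1)
      have habs : ‖(starRingEnd ℂ) a * (((1 - A : ℝ) : ℂ) / (A : ℂ)) / c‖
          = (A - 1) / C := by
        rw [norm_div, norm_mul, norm_div, Complex.norm_conj, Complex.norm_real,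
          Complex.norm_real, Real.norm_eq_abs, Real.norm_eq_abs, abs_of_pos hApos, ← hAdef, ← hCdef]
        rw [abs_of_nonpos (by linarith)]
        field_simp
        ring
      rw [habs]
      have hA1' : A + 1 ≠ 0 := by positivity
      field_simp
      nlinarith
  · rintro x ⟨z, hz, rfl⟩
    simp only [Set.mem_setOf_eq] at hz
    have key : A ≤ 1 + C * ‖z‖ := by
      calc A = ‖(c * z + (starRingEnd ℂ) a) + -(c * z)‖ := by
            rw [show (c * z + (starRingEnd ℂ) a) + -(c * z) = (starRingEnd ℂ) a by ring,
              Complex.norm_conj]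
        _ ≤ ‖c * z + (starRingEnd ℂ) a‖ + ‖-(c * z)‖ :=
            norm_add_le _ _
        _ = 1 + C * ‖z‖ := by rw [hz, norm_neg, norm_mul]
    have hzn : 0 ≤ ‖z‖ := norm_nonneg z
    show 1 - ‖z‖ ^ 2 ≤ 2 / (A + 1)
    rw [le_div_iff₀ (by linarith)]
    nlinarith [sq_nonneg (C * ‖z‖ - (A - 1))]
end
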